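/- arXiv:math/0507194 — 3 statements merged into one kernel-verified Lean document; each statement's English description precedes it below -/
import Mathlib

section
/- Let f ∈ ℂ[x₀,x₁,x₂] be a nonzero homogeneous polynomial of degree n that vanishes to order at least n−1 at a point P of ℙ²(ℂ), and suppose f = g·h with g, h homogeneous and nonconstant. Then g vanishes at P to order at least deg g, or h vanishes at P to order at least deg h. -/
open MvPolynomial

/-- The iterated partial derivative `∂₀^{α 0} ∂₁^{α 1} ∂₂^{α 2}` on `ℂ[x₀,x₁,x₂]`. -/
noncomputable def iterPD (α : Fin 3 → ℕ) :
    MvPolynomial (Fin 3) ℂ →ₗ[ℂ] MvPolynomial (Fin 3) ℂ :=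
  ((pderiv (0 : Fin 3)).toLinearMap ^ α 0) ∘ₗ
    ((pderiv (1 : Fin 3)).toLinearMap ^ α 1) ∘ₗ ((pderiv (2 : Fin 3)).toLinearMap ^ α 2)

/-- `f` vanishes to order at least `k` at the point of `ℙ²(ℂ)` with representative `a`:
every iterated partial derivative of total order `< k` vanishes at `a`. -/
def VanishesToOrder (k : ℕ) (a : Fin 3 → ℂ) (f : MvPolynomial (Fin 3) ℂ) : Prop :=
  ∀ α : Fin 3 → ℕ, α 0 + α 1 + α 2 < k → eval a (iterPD α f) = 0

namespace Stmt2Aux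

/-- Translation by `a`. -/
noncomputable def Tr (a : Fin 3 → ℂ) : MvPolynomial (Fin 3) ℂ →ₐ[ℂ] MvPolynomial (Fin 3) ℂ :=
  aeval (fun i => X i + C (a i))

lemma Tr_X (a : Fin 3 → ℂ) (j : Fin 3) : Tr a (X j) = X j + C (a j) := aeval_X _ _

lemma pderiv_Tr (a : Fin 3 → ℂ) (i : Fin 3) (f : MvPolynomial (Fin 3) ℂ) :
    pderiv i (Tr a f) = Tr a (pderiv i f) := by
  induction f using MvPolynomial.induction_on with
  | C c => simp [Tr, pderiv_C]
  | add f g hf hg => simp [map_add, hf, hg]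
  | mul_X f j hf =>
      rw [map_mul, Tr_X, pderiv_mul, hf, pderiv_mul]
      by_cases hij : i = j
      · subst hij; simp [Tr_X, pderiv_C, map_add, map_mul]
      · simp [Tr_X, pderiv_X_of_ne (Ne.symm hij), pderiv_C, map_add, map_mul]

lemma iterPow_Tr (a : Fin 3 → ℂ) (i : Fin 3) (k : ℕ) (f : MvPolynomial (Fin 3) ℂ) :
    ((pderiv i).toLinearMap ^ k) (Tr a f) = Tr a (((pderiv i).toLinearMap ^ k) f) := by
  induction k with
  | zero => simp
  | succ k ih =>
      rw [pow_succ', Module.End.mul_apply, ih]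
      exact pderiv_Tr a i _

lemma eval_Tr (a : Fin 3 → ℂ) (f : MvPolynomial (Fin 3) ℂ) :
    eval a f = eval (0 : Fin 3 → ℂ) (Tr a f) := by
  induction f using MvPolynomial.induction_on with
  | C c => simp [Tr]
  | add f g hf hg => simp [map_add, hf, hg]
  | mul_X f j hf => rw [map_mul, map_mul, Tr_X, hf]; simp

lemma coeff_pderiv' (i : Fin 3) (m : Fin 3 →₀ ℕ) (f : MvPolynomial (Fin 3) ℂ) :
    coeff m (pderiv i f) = (m i + 1 : ℕ) * coeff (m + Finsupp.single i 1) f := by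
  induction f using MvPolynomial.induction_on' with
  | add f g hf hg => simp [map_add, hf, hg, mul_add]
  | monomial s c =>
      rw [pderiv_monomial, coeff_monomial, coeff_monomial]
      by_cases hs : s = m + Finsupp.single i 1
      · subst hs
        have h1 : m + Finsupp.single i 1 - Finsupp.single i 1 = m := by
          ext j; rw [Finsupp.tsub_apply, Finsupp.add_apply]; omega
        have h2 : ((m + Finsupp.single i 1 : Fin 3 →₀ ℕ)) i = m i + 1 := by
          rw [Finsupp.add_apply, Finsupp.single_eq_same]
        rw [if_pos h1, if_pos rfl, h2]; push_cast; ring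
      · rw [if_neg hs]
        by_cases hd : s - Finsupp.single i 1 = m
        · rw [if_pos hd]
          have hsi : s i = 0 := by
            by_contra hne
            apply hs
            ext j
            have hdj := DFunLike.congr_fun hd j
            rw [Finsupp.tsub_apply] at hdj
            rw [Finsupp.add_apply]
            rcases eq_or_ne i j with rfl | hij
            · simp only [Finsupp.single_eq_same] at hdj ⊢; omega
            · simp only [Finsupp.single_eq_of_ne hij.symm] at hdj ⊢; omega
          simp [hsi]
        · rw [if_neg hd, mul_zero]

lemma coeff_pow_pderiv (i : Fin 3) (k : ℕ) (m : Fin 3 →₀ ℕ) (f : MvPolynomial (Fin 3) ℂ) :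
    coeff m (((pderiv i).toLinearMap ^ k) f) =
      ((∏ t ∈ Finset.range k, (m i + t + 1) : ℕ) : ℂ) * coeff (m + Finsupp.single i k) f := by
  induction k generalizing f with
  | zero => simp
  | succ k ih =>
      rw [pow_succ, Module.End.mul_apply, ih]
      simp only [Derivation.coeFn_coe]
      rw [coeff_pderiv']
      have hsum : m + Finsupp.single i k + Finsupp.single i 1 = m + Finsupp.single i (k + 1) := by
        rw [add_assoc, ← Finsupp.single_add]
      have happ : ((m + Finsupp.single i k : Fin 3 →₀ ℕ)) i = m i + k := by
        rw [Finsupp.add_apply, Finsupp.single_eq_same]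
      rw [hsum, happ, Finset.prod_range_succ (fun t => m i + t + 1) k]
      push_cast; ring

/-- the multi-index `α` as a finsupp -/
noncomputable def toF (α : Fin 3 → ℕ) : Fin 3 →₀ ℕ :=
  Finsupp.single 0 (α 0) + Finsupp.single 1 (α 1) + Finsupp.single 2 (α 2)

lemma toF_coe (m : Fin 3 →₀ ℕ) : toF ⇑m = m := by
  ext j
  fin_cases j <;>
    simp [toF, Finsupp.add_apply, Finsupp.single_apply, Fin.ext_iff]

lemma degree_fin3 (m : Fin 3 →₀ ℕ) : m.degree = m 0 + m 1 + m 2 := by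
  rw [Finsupp.degree_apply]
  rw [Finset.sum_subset (Finset.subset_univ m.support)
    (by intro x _ hx; exact Finsupp.notMem_support_iff.mp hx)]
  rw [Fin.sum_univ_three]

lemma degree_toF (α : Fin 3 → ℕ) : (toF α).degree = α 0 + α 1 + α 2 := by
  rw [degree_fin3]
  simp [toF, Finsupp.add_apply, Finsupp.single_apply, Fin.ext_iff]

lemma degree_add3 (u v : Fin 3 →₀ ℕ) : (u + v).degree = u.degree + v.degree := by
  simp only [degree_fin3, Finsupp.add_apply]; ring

lemma bridge (a : Fin 3 → ℂ) (α : Fin 3 → ℕ) (f : MvPolynomial (Fin 3) ℂ) :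
    eval a (iterPD α f) =
      (((α 0).factorial * (α 1).factorial * (α 2).factorial : ℕ) : ℂ)
        * coeff (toF α) (Tr a f) := by
  rw [eval_Tr]
  have hcomm : iterPD α (Tr a f) = Tr a (iterPD α f) := by
    simp only [iterPD, LinearMap.comp_apply, iterPow_Tr]
  rw [← hcomm]
  rw [eval_zero, constantCoeff_eq]
  simp only [iterPD, LinearMap.comp_apply]
  rw [coeff_pow_pderiv, coeff_pow_pderiv, coeff_pow_pderiv]
  have h01 : (Finsupp.single (0 : Fin 3) (α 0)) 1 = 0 := by
    simp [Finsupp.single_apply]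
  have h2 : ((Finsupp.single (0 : Fin 3) (α 0) + Finsupp.single 1 (α 1) : Fin 3 →₀ ℕ)) 2 = 0 := by
    simp [Finsupp.add_apply, Finsupp.single_apply]
  have h0 : ((0 : Fin 3 →₀ ℕ)) 0 = 0 := rfl
  rw [h0, zero_add, h01, h2]
  have hfac : ∀ k : ℕ, (∏ t ∈ Finset.range k, (0 + t + 1)) = k.factorial := by
    intro k
    simp only [zero_add]
    exact Finset.prod_range_add_one_eq_factorial k
  rw [hfac, hfac, hfac]
  have hT : toF α = Finsupp.single 0 (α 0) + Finsupp.single 1 (α 1) + Finsupp.single 2 (α 2) := rfl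
  rw [hT]
  push_cast; ring

lemma factcast_ne (α : Fin 3 → ℕ) :
    (((α 0).factorial * (α 1).factorial * (α 2).factorial : ℕ) : ℂ) ≠ 0 := by
  exact Nat.cast_ne_zero.mpr (Nat.mul_pos (Nat.mul_pos (Nat.factorial_pos _)
    (Nat.factorial_pos _)) (Nat.factorial_pos _)).ne'

lemma compNe {Q : MvPolynomial (Fin 3) ℂ} {m : Fin 3 →₀ ℕ} (hQ : coeff m Q ≠ 0) :
    homogeneousComponent m.degree Q ≠ 0 := by
  intro h0
  apply hQ
  have := coeff_homogeneousComponent (σ := Fin 3) (R := ℂ) m.degree Q m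
  rw [h0, coeff_zero, if_pos rfl] at this
  exact this.symm

end Stmt2Aux

open Stmt2Aux in
theorem stmt_2 (n p q : ℕ) (f g h : MvPolynomial (Fin 3) ℂ)
    (hf0 : f ≠ 0) (hf : f.IsHomogeneous n)
    (P : Projectivization ℂ (Fin 3 → ℂ))
    (hvan : VanishesToOrder (n - 1) P.rep f)
    (hfactor : f = g * h)
    (hg : g.IsHomogeneous p) (hh : h.IsHomogeneous q)
    (hp : 0 < p) (hq : 0 < q) :
    VanishesToOrder p P.rep g ∨ VanishesToOrder q P.rep h := by
  by_contra hcon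
  push_neg at hcon
  obtain ⟨hng, hnh⟩ := hcon
  simp only [VanishesToOrder, not_forall] at hng hnh
  obtain ⟨α, hαp, hα⟩ := hng
  obtain ⟨β, hβq, hβ⟩ := hnh
  set a := P.rep with ha
  have hn : n = p + q := hf.inj_right (hfactor ▸ hg.mul hh) hf0
  set G := Tr a g with hG
  set H := Tr a h with hH
  have hFGH : Tr a f = G * H := by rw [hfactor, map_mul]
  -- low-order coefficients of G*H vanish
  have hcoefff : ∀ m : Fin 3 →₀ ℕ, m.degree < n - 1 → coeff m (G * H) = 0 := by
    intro m hm
    have h1 := bridge a ⇑m f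
    have h2 : eval a (iterPD ⇑m f) = 0 := by
      apply hvan ⇑m
      rw [← degree_fin3]; exact hm
    rw [h2, toF_coe, hFGH] at h1
    exact (mul_eq_zero.mp h1.symm).resolve_left (factcast_ne ⇑m)
  -- nonvanishing low coefficients of G and H
  have hcoeffG : coeff (toF α) G ≠ 0 := by
    intro h0
    apply hα
    rw [bridge a α g, ← hG, h0, mul_zero]
  have hcoeffH : coeff (toF β) H ≠ 0 := by
    intro h0
    apply hβ
    rw [bridge a β h, ← hH, h0, mul_zero]
  -- minimal homogeneous components
  have hGex : ∃ d, homogeneousComponent d G ≠ 0 := ⟨(toF α).degree, compNe hcoeffG⟩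
  have hHex : ∃ d, homogeneousComponent d H ≠ 0 := ⟨(toF β).degree, compNe hcoeffH⟩
  set A := Nat.find hGex with hAdef
  set B := Nat.find hHex with hBdef
  have hA : homogeneousComponent A G ≠ 0 := Nat.find_spec hGex
  have hB : homogeneousComponent B H ≠ 0 := Nat.find_spec hHex
  have hAlt : A < p := lt_of_le_of_lt (Nat.find_le (compNe hcoeffG))
    (by rw [degree_toF]; exact hαp)
  have hBlt : B < q := lt_of_le_of_lt (Nat.find_le (compNe hcoeffH))
    (by rw [degree_toF]; exact hβq)
  have hGlow : ∀ m : Fin 3 →₀ ℕ, m.degree < A → coeff m G = 0 := by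
    intro m hm
    by_contra hne
    exact Nat.find_min hGex hm (compNe hne)
  have hHlow : ∀ m : Fin 3 →₀ ℕ, m.degree < B → coeff m H = 0 := by
    intro m hm
    by_contra hne
    exact Nat.find_min hHex hm (compNe hne)
  -- the lowest component of the product
  have hmul : homogeneousComponent (A + B) (G * H)
      = homogeneousComponent A G * homogeneousComponent B H := by
    apply MvPolynomial.ext
    intro m
    rw [coeff_homogeneousComponent, MvPolynomial.coeff_mul, MvPolynomial.coeff_mul]
    simp only [coeff_homogeneousComponent]
    by_cases hm : m.degree = A + B
    · rw [if_pos hm]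
      apply Finset.sum_congr rfl
      intro x hx
      have hxm : x.1 + x.2 = m := Finset.HasAntidiagonal.mem_antidiagonal.mp hx
      have hdeg : x.1.degree + x.2.degree = A + B := by
        rw [← hm, ← hxm, degree_add3]
      rcases lt_trichotomy x.1.degree A with hlt | heq | hgt
      · rw [hGlow x.1 hlt]; simp [if_neg (show ¬x.1.degree = A by omega)]
      · have h2 : x.2.degree = B := by omega
        rw [if_pos heq, if_pos h2]
      · have h2 : x.2.degree < B := by omega
        rw [hHlow x.2 h2]; simp [if_neg (show ¬x.2.degree = B by omega)]
    · rw [if_neg hm]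
      symm
      apply Finset.sum_eq_zero
      intro x hx
      have hxm : x.1 + x.2 = m := Finset.HasAntidiagonal.mem_antidiagonal.mp hx
      by_cases h1 : x.1.degree = A
      · by_cases h2 : x.2.degree = B
        · exfalso; apply hm; rw [← hxm, degree_add3, h1, h2]
        · rw [if_neg h2, mul_zero]
      · rw [if_neg h1, zero_mul]
  have hABne : homogeneousComponent (A + B) (G * H) ≠ 0 := by
    rw [hmul]; exact mul_ne_zero hA hB
  obtain ⟨m, hm⟩ := MvPolynomial.ne_zero_iff.mp hABne
  rw [coeff_homogeneousComponent] at hm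
  by_cases hdm : m.degree = A + B
  · rw [if_pos hdm] at hm
    apply hm
    apply hcoefff
    omega
  · rw [if_neg hdm] at hm
    exact hm rfl
end

section
/- Let f, g ∈ ℂ[x₀,x₁,x₂] be homogeneous polynomials of degrees m ≥ 1 and n ≥ 1 respectively, having no common nonconstant factor. Then the set of common zeros of f and g in ℙ²(ℂ) is finite and has at most m·n elements. -/
open MvPolynomial

namespace BezoutAux

noncomputable section

abbrev R3 := MvPolynomial (Fin 3) ℂ

abbrev A (e : ℕ) : Submodule ℂ R3 := homogeneousSubmodule (Fin 3) ℂ e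

/-! ### Dimension of the space of homogeneous polynomials -/

def symEquiv (e : ℕ) : {d : Fin 3 →₀ ℕ // d.degree = e} ≃ Sym (Fin 3) e :=
  Equiv.subtypeEquiv Multiset.toFinsupp.toEquiv.symm (by
    intro d
    show d.degree = e ↔ Multiset.card (Finsupp.toMultiset d) = e
    rw [Finsupp.card_toMultiset]
    rfl)

instance fintypeDeg (e : ℕ) : Fintype {d : Fin 3 →₀ ℕ // d.degree = e} :=
  Fintype.ofEquiv _ (symEquiv e).symm

instance fintypeDeg' (e : ℕ) : Fintype ↑{d : Fin 3 →₀ ℕ | d.degree = e} := fintypeDeg e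

lemma card_deg (e : ℕ) :
    Fintype.card {d : Fin 3 →₀ ℕ // d.degree = e} = (e + 2).choose 2 := by
  rw [Fintype.card_congr (symEquiv e), Sym.card_sym_eq_choose]
  have h3 : Fintype.card (Fin 3) = 3 := by simp
  rw [h3]
  have h : 3 + e - 1 = e + 2 := by omega
  rw [h]
  rw [← Nat.choose_symm (Nat.le_add_right e 2)]
  congr 1
  omega

def basisA (e : ℕ) :
    Module.Basis {d : Fin 3 →₀ ℕ | d.degree = e} ℂ (A e) :=
  (basisRestrictSupport ℂ _).map
    (LinearEquiv.ofEq _ _ (homogeneousSubmodule_eq_finsupp_supported (Fin 3) ℂ e).symm)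

instance finDimA (e : ℕ) : FiniteDimensional ℂ (A e) :=
  Module.Finite.of_basis (basisA e)

lemma finrank_A (e : ℕ) : Module.finrank ℂ (A e) = (e + 2).choose 2 := by
  rw [Module.finrank_eq_card_basis (basisA e)]
  exact card_deg e

lemma two_mul_choose (t : ℕ) : 2 * (t + 2).choose 2 = (t + 1) * (t + 2) := by
  induction t with
  | zero => rfl
  | succ t ih =>
    have h : (t + 1 + 2) = (t + 2) + 1 := by omega
    rw [h, Nat.choose_succ_succ (t + 2) 1]
    rw [Nat.mul_add, ih, Nat.choose_one_right]
    ring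

/-! ### Misc algebra lemmas -/

lemma factor_component {n D : ℕ} {g a c : R3} (hg : g.IsHomogeneous n)
    (ha : a.IsHomogeneous D) (hnD : n ≤ D) (h : a = c * g) :
    a = (homogeneousComponent (D - n) c) * g := by
  have key : a = ∑ i ∈ Finset.range (c.totalDegree + 1),
      (homogeneousComponent D) ((homogeneousComponent i c) * g) := by
    calc a = homogeneousComponent D a := by
            rw [homogeneousComponent_of_mem ((mem_homogeneousSubmodule _ _).2 ha), if_pos rfl]
      _ = homogeneousComponent D
            ((∑ i ∈ Finset.range (c.totalDegree + 1), homogeneousComponent i c) * g) := by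
            rw [sum_homogeneousComponent, ← h]
      _ = homogeneousComponent D
            (∑ i ∈ Finset.range (c.totalDegree + 1), homogeneousComponent i c * g) := by
            rw [Finset.sum_mul]
      _ = ∑ i ∈ Finset.range (c.totalDegree + 1),
            (homogeneousComponent D) ((homogeneousComponent i c) * g) := map_sum _ _ _
  have hterm : ∀ i, (homogeneousComponent D) ((homogeneousComponent i c) * g)
      = if i = D - n then (homogeneousComponent i c) * g else 0 := by
    intro i
    have hmem : (homogeneousComponent i c) * g ∈ homogeneousSubmodule (Fin 3) ℂ (i + n) :=
      (mem_homogeneousSubmodule _ _).2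
        ((homogeneousComponent_isHomogeneous i c).mul hg)
    rw [homogeneousComponent_of_mem hmem]
    congr 1
    simp only [eq_iff_iff]
    omega
  rw [key]
  simp_rw [hterm]
  rw [Finset.sum_ite_eq' (Finset.range (c.totalDegree + 1)) (D - n)
    (fun i => (homogeneousComponent i c) * g)]
  by_cases hmem : D - n ∈ Finset.range (c.totalDegree + 1)
  · rw [if_pos hmem]
  · rw [if_neg hmem]
    have hz : homogeneousComponent (D - n) c = 0 := by
      apply homogeneousComponent_eq_zero
      simp only [Finset.mem_range] at hmem
      omega
    rw [hz, zero_mul]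

/-- linear form associated to a functional -/
def lin (φ : (Fin 3 → ℂ) →ₗ[ℂ] ℂ) : R3 :=
  ∑ t : Fin 3, C (φ (fun j => if t = j then 1 else 0)) * X t

lemma lin_isHomogeneous (φ : (Fin 3 → ℂ) →ₗ[ℂ] ℂ) : (lin φ).IsHomogeneous 1 :=
  IsHomogeneous.sum _ _ _ (fun t _ => isHomogeneous_C_mul_X _ t)

lemma eval_lin (φ : (Fin 3 → ℂ) →ₗ[ℂ] ℂ) (w : Fin 3 → ℂ) :
    eval w (lin φ) = φ w := by
  rw [lin, map_sum]
  simp only [map_mul, eval_C, eval_X]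
  conv_rhs => rw [pi_eq_sum_univ w, map_sum]
  refine Finset.sum_congr rfl fun t _ => ?_
  rw [map_smul, smul_eq_mul, mul_comm]

lemma exists_functional {v w : Fin 3 → ℂ} (h : v ∉ Submodule.span ℂ {w}) :
    ∃ φ : (Fin 3 → ℂ) →ₗ[ℂ] ℂ, φ w = 0 ∧ φ v ≠ 0 := by
  set S := Submodule.span ℂ {w} with hS
  have hv : S.mkQ v ≠ 0 := by
    simp only [Submodule.mkQ_apply, ne_eq, Submodule.Quotient.mk_eq_zero]
    exact h
  obtain ⟨ψ, hψ⟩ : ∃ ψ : ((Fin 3 → ℂ) ⧸ S) →ₗ[ℂ] ℂ, ψ (S.mkQ v) ≠ 0 := by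
    by_contra hcon
    push_neg at hcon
    exact hv ((Module.forall_dual_apply_eq_zero_iff ℂ _).1 hcon)
  refine ⟨ψ ∘ₗ S.mkQ, ?_, hψ⟩
  have hwS : w ∈ S := Submodule.mem_span_singleton_self w
  show ψ (S.mkQ w) = 0
  rw [show S.mkQ w = 0 from (Submodule.Quotient.mk_eq_zero S).2 hwS, map_zero]

/-- evaluation at a point, as a linear map -/
def evalLin (w : Fin 3 → ℂ) : R3 →ₗ[ℂ] ℂ where
  toFun p := eval w p
  map_add' p q := by simp
  map_smul' c p := by simp [smul_eq_C_mul]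

@[simp] lemma evalLin_apply (w : Fin 3 → ℂ) (p : R3) : evalLin w p = eval w p := rfl

/-! ### The main counting lemma -/

set_option maxHeartbeats 2000000 in
lemma finset_card_le (m n : ℕ) (hm : 1 ≤ m) (hn : 1 ≤ n) (f g : R3)
    (hf : f.IsHomogeneous m) (hg : g.IsHomogeneous n)
    (hrel : IsRelPrime f g) (hf0 : f ≠ 0) (hg0 : g ≠ 0)
    (s : Finset (Projectivization ℂ (Fin 3 → ℂ)))
    (hs : ∀ Q ∈ s, eval Q.rep f = 0 ∧ eval Q.rep g = 0) : s.card ≤ m * n := by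
  classical
  set k := s.card with hk
  set d := m + n + k with hd
  -- the points
  set ee := s.equivFin.symm with hee
  set v : Fin k → (Fin 3 → ℂ) := fun i => ((ee i : Projectivization ℂ (Fin 3 → ℂ))).rep with hv
  have hv0 : ∀ i, v i ≠ 0 := fun i => Projectivization.rep_nonzero _
  have hvz : ∀ i, eval (v i) f = 0 ∧ eval (v i) g = 0 := fun i => hs _ (ee i).2
  have hvspan : ∀ i j : Fin k, i ≠ j → v i ∉ Submodule.span ℂ {v j} := by
    intro i j hij hmem
    rw [Submodule.mem_span_singleton] at hmem
    obtain ⟨c, hc⟩ := hmem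
    have hc0 : c ≠ 0 := by
      rintro rfl
      exact hv0 i (by rw [← hc, zero_smul])
    have : (ee i : Projectivization ℂ (Fin 3 → ℂ)) = (ee j : Projectivization ℂ (Fin 3 → ℂ)) := by
      conv_lhs => rw [← Projectivization.mk_rep (ee i : Projectivization ℂ (Fin 3 → ℂ))]
      conv_rhs => rw [← Projectivization.mk_rep (ee j : Projectivization ℂ (Fin 3 → ℂ))]
      rw [Projectivization.mk_eq_mk_iff]
      exact ⟨Units.mk0 c hc0, hc⟩
    have hij2 : ee i = ee j := Subtype.ext this
    exact hij (ee.injective hij2)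
  -- the three linear maps
  have hmemΦ : ∀ x : A (n + k) × A (m + k), f * (x.1 : R3) + g * (x.2 : R3) ∈ A d := by
    intro x
    have h1 : (f * (x.1 : R3)).IsHomogeneous (m + (n + k)) :=
      hf.mul ((mem_homogeneousSubmodule _ _).1 x.1.2)
    have h2 : (g * (x.2 : R3)).IsHomogeneous (n + (m + k)) :=
      hg.mul ((mem_homogeneousSubmodule _ _).1 x.2.2)
    have e1 : m + (n + k) = d := by omega
    have e2 : n + (m + k) = d := by omega
    exact Submodule.add_mem _ ((mem_homogeneousSubmodule _ _).2 (e1 ▸ h1))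
      ((mem_homogeneousSubmodule _ _).2 (e2 ▸ h2))
  set Φ : (A (n + k) × A (m + k)) →ₗ[ℂ] A d :=
    { toFun := fun x => ⟨f * (x.1 : R3) + g * (x.2 : R3), hmemΦ x⟩
      map_add' := by
        intro x y
        apply Subtype.ext
        simp only [Submodule.coe_add, Prod.fst_add, Prod.snd_add]
        push_cast
        ring
      map_smul' := by
        intro c x
        apply Subtype.ext
        simp only [Prod.smul_fst, Prod.smul_snd, SetLike.val_smul, RingHom.id_apply]
        rw [mul_smul_comm, mul_smul_comm, smul_add] } with hΦ
  have hmemΨ1 : ∀ c : A k, g * (c : R3) ∈ A (n + k) := fun c =>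
    (mem_homogeneousSubmodule _ _).2 (hg.mul ((mem_homogeneousSubmodule _ _).1 c.2))
  have hmemΨ2 : ∀ c : A k, -(f * (c : R3)) ∈ A (m + k) := fun c =>
    Submodule.neg_mem _
      ((mem_homogeneousSubmodule _ _).2 (hf.mul ((mem_homogeneousSubmodule _ _).1 c.2)))
  set Ψ : A k →ₗ[ℂ] (A (n + k) × A (m + k)) :=
    { toFun := fun c => (⟨g * (c : R3), hmemΨ1 c⟩, ⟨-(f * (c : R3)), hmemΨ2 c⟩)
      map_add' := by
        intro x y
        refine Prod.ext (Subtype.ext ?_) (Subtype.ext ?_) <;>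
        · simp only [Submodule.coe_add, Prod.fst_add, Prod.snd_add]
          push_cast
          ring
      map_smul' := by
        intro c x
        refine Prod.ext (Subtype.ext ?_) (Subtype.ext ?_)
        · simp only [SetLike.val_smul, RingHom.id_apply, Prod.smul_fst, Prod.smul_snd]
          rw [mul_smul_comm]
        · simp only [SetLike.val_smul, RingHom.id_apply, Prod.smul_fst, Prod.smul_snd]
          rw [mul_smul_comm, smul_neg] } with hΨ
  set E : A d →ₗ[ℂ] (Fin k → ℂ) :=
    LinearMap.pi (fun i => (evalLin (v i)) ∘ₗ (A d).subtype) with hE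
  -- exactness: ker Φ = range Ψ
  have hker : LinearMap.ker Φ = LinearMap.range Ψ := by
    apply le_antisymm
    · rintro ⟨a, b⟩ hx
      have hx0 : f * (a : R3) + g * (b : R3) = 0 :=
        congrArg Subtype.val (LinearMap.mem_ker.1 hx)
      have hdvd : g ∣ (a : R3) * f := ⟨-(b : R3), by linear_combination hx0⟩
      obtain ⟨c₀, hc₀⟩ := hrel.symm.dvd_of_dvd_mul_right hdvd
      have ha : (a : R3).IsHomogeneous (n + k) := (mem_homogeneousSubmodule _ _).1 a.2
      have hfac : (a : R3) = (homogeneousComponent ((n + k) - n) c₀) * g :=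
        factor_component hg ha (by omega) (by rw [hc₀]; ring)
      have hnk : (n + k) - n = k := by omega
      rw [hnk] at hfac
      set c : R3 := homogeneousComponent k c₀ with hcdef
      have hcmem : c ∈ A k := (mem_homogeneousSubmodule _ _).2
        (homogeneousComponent_isHomogeneous k c₀)
      have hb : (b : R3) = -(f * c) := by
        have h2 : g * ((b : R3) + f * c) = 0 := by
          linear_combination hx0 - f * hfac
        rcases mul_eq_zero.1 h2 with h | h
        · exact absurd h hg0
        · linear_combination h
      refine ⟨⟨c, hcmem⟩, ?_⟩
      refine Prod.ext (Subtype.ext ?_) (Subtype.ext ?_)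
      · show g * c = (a : R3)
        rw [hfac]; ring
      · show -(f * c) = (b : R3)
        rw [hb]
    · rintro x ⟨c, rfl⟩
      rw [LinearMap.mem_ker]
      apply Subtype.ext
      show f * (g * (c : R3)) + g * (-(f * (c : R3))) = (0 : R3)
      ring
  -- Ψ injective
  have hΨinj : Function.Injective Ψ := by
    rw [← LinearMap.ker_eq_bot]
    rw [Submodule.eq_bot_iff]
    rintro c hc
    have h1 : g * (c : R3) = 0 :=
      congrArg (fun x => ((Prod.fst x : A (n + k)) : R3)) (LinearMap.mem_ker.1 hc)
    rcases mul_eq_zero.1 h1 with h | h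
    · exact absurd h hg0
    · exact Subtype.ext h
  -- range Φ ≤ ker E
  have hrk : LinearMap.range Φ ≤ LinearMap.ker E := by
    rintro y ⟨x, rfl⟩
    rw [LinearMap.mem_ker]
    funext j
    show eval (v j) (f * (x.1 : R3) + g * (x.2 : R3)) = 0
    rw [map_add, map_mul, map_mul, (hvz j).1, (hvz j).2, zero_mul, zero_mul, add_zero]
  -- E surjective
  have hdelta : ∀ i : Fin k, ∃ p : A d,
      (∀ j, E p j = if j = i then 1 else 0) := by
    intro i
    obtain ⟨t0, ht0⟩ : ∃ t0, v i t0 ≠ 0 := by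
      by_contra hcon
      push_neg at hcon
      exact hv0 i (funext hcon)
    set φ0 : (Fin 3 → ℂ) →ₗ[ℂ] ℂ := LinearMap.proj t0 with hφ0
    have hφ0i : φ0 (v i) ≠ 0 := ht0
    have hφ : ∀ j : Fin k, ∃ φ : (Fin 3 → ℂ) →ₗ[ℂ] ℂ,
        (j ≠ i → φ (v j) = 0) ∧ φ (v i) ≠ 0 := by
      intro j
      by_cases hj : j = i
      · subst hj
        exact ⟨φ0, fun h => absurd rfl h, hφ0i⟩
      · obtain ⟨φ, h1, h2⟩ := exists_functional (hvspan i j (Ne.symm hj))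
        exact ⟨φ, fun _ => h1, h2⟩
    choose φ hφ1 hφ2 using hφ
    set q : R3 := (∏ j ∈ Finset.univ.erase i, lin (φ j)) * (lin φ0) ^ (d - (k - 1)) with hq
    have hkpos : 0 < k := i.pos
    have hcard : (Finset.univ.erase i).card = k - 1 := by
      rw [Finset.card_erase_of_mem (Finset.mem_univ i), Finset.card_univ, Fintype.card_fin]
    have hq_hom : q.IsHomogeneous d := by
      have h1 : (∏ j ∈ Finset.univ.erase i, lin (φ j)).IsHomogeneous
          (∑ _j ∈ Finset.univ.erase i, 1) :=
        IsHomogeneous.prod _ _ _ (fun j _ => lin_isHomogeneous _)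
      rw [Finset.sum_const, smul_eq_mul, mul_one, hcard] at h1
      have h2 : ((lin φ0) ^ (d - (k - 1))).IsHomogeneous (1 * (d - (k - 1))) :=
        (lin_isHomogeneous φ0).pow _
      rw [one_mul] at h2
      have h3 := h1.mul h2
      have he : (k - 1) + (d - (k - 1)) = d := by omega
      rwa [he] at h3
    have hqi : eval (v i) q ≠ 0 := by
      rw [hq, map_mul, map_pow, map_prod]
      apply mul_ne_zero
      · rw [Finset.prod_ne_zero_iff]
        intro j _
        rw [eval_lin]
        exact hφ2 j
      · apply pow_ne_zero
        rw [eval_lin]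
        exact hφ0i
    have hqj : ∀ j, j ≠ i → eval (v j) q = 0 := by
      intro j hj
      rw [hq, map_mul, map_prod]
      have hzero : eval (v j) (lin (φ j)) = 0 := by
        rw [eval_lin]; exact hφ1 j hj
      rw [Finset.prod_eq_zero (Finset.mem_erase.2 ⟨hj, Finset.mem_univ j⟩) hzero, zero_mul]
    refine ⟨(eval (v i) q)⁻¹ • ⟨q, (mem_homogeneousSubmodule _ _).2 hq_hom⟩, ?_⟩
    intro j
    have hval : E ((eval (v i) q)⁻¹ • (⟨q, (mem_homogeneousSubmodule _ _).2 hq_hom⟩ : A d)) j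
        = eval (v j) ((eval (v i) q)⁻¹ • q) := rfl
    rw [hval, smul_eq_C_mul, map_mul, eval_C]
    by_cases hji : j = i
    · subst hji
      rw [if_pos rfl]
      exact inv_mul_cancel₀ hqi
    · rw [if_neg hji, hqj j hji, mul_zero]
  have hEsurj : Function.Surjective E := by
    intro w
    choose p hp using hdelta
    refine ⟨∑ i, w i • p i, ?_⟩
    rw [map_sum]
    funext j
    rw [Finset.sum_apply]
    have hterm : ∀ i, (E (w i • p i)) j = if j = i then w i else 0 := by
      intro i
      rw [map_smul, Pi.smul_apply, hp i j, smul_eq_mul, mul_ite, mul_one, mul_zero]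
    simp_rw [hterm]
    rw [Finset.sum_ite_eq Finset.univ j w, if_pos (Finset.mem_univ j)]
  -- dimension count
  have h1 : Module.finrank ℂ (LinearMap.range E) + Module.finrank ℂ (LinearMap.ker E)
      = Module.finrank ℂ (A d) := LinearMap.finrank_range_add_finrank_ker E
  have hrE : Module.finrank ℂ (LinearMap.range E) = k := by
    rw [LinearMap.range_eq_top.2 hEsurj, finrank_top, Module.finrank_pi, Fintype.card_fin]
  have h2 : Module.finrank ℂ (LinearMap.range Φ) + Module.finrank ℂ (LinearMap.ker Φ)
      = Module.finrank ℂ (A (n + k) × A (m + k)) := LinearMap.finrank_range_add_finrank_ker Φ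
  have hkerΦ : Module.finrank ℂ (LinearMap.ker Φ) = (k + 2).choose 2 := by
    rw [hker, LinearMap.finrank_range_of_inj hΨinj, finrank_A]
  have hprod : Module.finrank ℂ (A (n + k) × A (m + k))
      = (n + k + 2).choose 2 + (m + k + 2).choose 2 := by
    rw [Module.finrank_prod, finrank_A, finrank_A]
  have h3 : Module.finrank ℂ (LinearMap.range Φ) ≤ Module.finrank ℂ (LinearMap.ker E) :=
    Submodule.finrank_mono hrk
  have hAd : Module.finrank ℂ (A d) = (m + n + k + 2).choose 2 := by
    rw [finrank_A]
  have key : (m + n + k + 2).choose 2 + (k + 2).choose 2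
      = m * n + ((n + k + 2).choose 2 + (m + k + 2).choose 2) := by
    have e1 := two_mul_choose (m + n + k)
    have e2 := two_mul_choose k
    have e3 := two_mul_choose (n + k)
    have e4 := two_mul_choose (m + k)
    nlinarith [e1, e2, e3, e4]
  show s.card ≤ m * n
  rw [← hk]
  linarith [h1, h2, h3, hrE, hkerΦ, hprod, hAd, key]

lemma eq_C_of_tdz {p : R3} (h : p.totalDegree = 0) : p = C (coeff 0 p) := by
  ext mdeg
  rw [coeff_C]
  split_ifs with h0
  · rw [← h0]
  · by_contra hne
    rw [totalDegree_eq_zero_iff] at h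
    have hall := h mdeg (mem_support_iff.2 hne)
    exact h0 ((Finsupp.ext (fun x => hall x)).symm)

end

end BezoutAux

open MvPolynomial BezoutAux

theorem stmt_3 (m n : ℕ) (hm : 1 ≤ m) (hn : 1 ≤ n) (f g : MvPolynomial (Fin 3) ℂ)
    (hf : f.IsHomogeneous m) (hg : g.IsHomogeneous n)
    (hcop : ¬∃ d : MvPolynomial (Fin 3) ℂ, d ∣ f ∧ d ∣ g ∧ 0 < d.totalDegree) :
    {Q : Projectivization ℂ (Fin 3 → ℂ) |
        eval Q.rep f = 0 ∧ eval Q.rep g = 0}.Finite ∧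
      {Q : Projectivization ℂ (Fin 3 → ℂ) |
          eval Q.rep f = 0 ∧ eval Q.rep g = 0}.ncard ≤ m * n := by
  classical
  -- nonvanishing
  have hfg0 : f ≠ 0 ∧ g ≠ 0 := by
    constructor
    · intro hf0
      by_cases hg0 : g = 0
      · exact hcop ⟨X 0, hf0 ▸ dvd_zero _, hg0 ▸ dvd_zero _, by rw [totalDegree_X]; norm_num⟩
      · exact hcop ⟨g, hf0 ▸ dvd_zero _, dvd_refl g, by rw [hg.totalDegree hg0]; omega⟩
    · intro hg0
      by_cases hf0 : f = 0
      · exact hcop ⟨X 0, hf0 ▸ dvd_zero _, hg0 ▸ dvd_zero _, by rw [totalDegree_X]; norm_num⟩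
      · exact hcop ⟨f, dvd_refl f, hg0 ▸ dvd_zero _, by rw [hf.totalDegree hf0]; omega⟩
  obtain ⟨hf0, hg0⟩ := hfg0
  have hrel : IsRelPrime f g := by
    intro p hpf hpg
    by_contra hu
    apply hcop
    refine ⟨p, hpf, hpg, ?_⟩
    rcases Nat.eq_zero_or_pos p.totalDegree with h0 | h
    · exfalso
      have hp0 : p ≠ 0 := by
        rintro rfl
        exact hf0 (zero_dvd_iff.1 hpf)
      have hpc := eq_C_of_tdz h0
      have hc0 : coeff 0 p ≠ 0 := by
        intro hc
        rw [hc, map_zero] at hpc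
        exact hp0 hpc
      exact hu (hpc ▸ (isUnit_iff_ne_zero.2 hc0).map (C : ℂ →+* R3))
    · exact h
  set S : Set (Projectivization ℂ (Fin 3 → ℂ)) :=
    {Q | eval Q.rep f = 0 ∧ eval Q.rep g = 0} with hS
  have hcard : ∀ t : Finset (Projectivization ℂ (Fin 3 → ℂ)), ↑t ⊆ S → t.card ≤ m * n :=
    fun t ht => finset_card_le m n hm hn f g hf hg hrel hf0 hg0 t (fun Q hQ => ht hQ)
  have hfin : S.Finite := by
    by_contra hinf
    obtain ⟨t, hts, htc⟩ := Set.Infinite.exists_subset_card_eq hinf (m * n + 1)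
    have := hcard t hts
    omega
  refine ⟨hfin, ?_⟩
  have hle := hcard hfin.toFinset (by simp)
  rwa [Set.ncard_eq_toFinset_card S hfin]
end

section
/- Let n ≥ 2 and let a ∈ ℂ³ be a nonzero vector. The linear map which sends a homogeneous polynomial f of degree n in ℂ[x₀,x₁,x₂] to the family of values at a of all its iterated partial derivatives of total order exactly n−2 (indexed by the binom(n,2) multi-indices α ∈ ℕ³ with |α| = n−2) is surjective onto ℂ^{binom(n,2)}. -/
open MvPolynomial

namespace Stmt7Aux

theorem powPD_monomial (i : Fin 3) (k : ℕ) (β : Fin 3 →₀ ℕ) (c : ℂ) :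
    ((pderiv i).toLinearMap ^ k) (monomial β c)
      = monomial (β - Finsupp.single i k) (c * ((β i).descFactorial k : ℂ)) := by
  induction k with
  | zero => simp
  | succ k ih =>
      rw [pow_succ', Module.End.mul_apply, ih]
      rw [Derivation.coeFn_coe, pderiv_monomial]
      have he : β - Finsupp.single i k - Finsupp.single i 1
          = β - Finsupp.single i (k + 1) := by
        ext j
        simp only [Finsupp.tsub_apply, Finsupp.single_apply]
        split_ifs <;> omega
      have h1 : (β - Finsupp.single i k) i = β i - k := by
        simp [Finsupp.tsub_apply]
      rw [he, h1, Nat.descFactorial_succ]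
      push_cast
      ring_nf

/-- The finsupp on `Fin 3` corresponding to a function. -/
noncomputable def sgl (γ : Fin 3 → ℕ) : Fin 3 →₀ ℕ :=
  Finsupp.single 0 (γ 0) + Finsupp.single 1 (γ 1) + Finsupp.single 2 (γ 2)

theorem sgl_apply (γ : Fin 3 → ℕ) (j : Fin 3) : sgl γ j = γ j := by
  fin_cases j <;> simp [sgl, Finsupp.single_apply]

theorem iterPD_monomial (γ : Fin 3 → ℕ) (β : Fin 3 →₀ ℕ) (c : ℂ) :
    iterPD γ (monomial β c)
      = monomial (β - sgl γ)
          (c * ((β 0).descFactorial (γ 0) : ℂ) * ((β 1).descFactorial (γ 1) : ℂ)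
            * ((β 2).descFactorial (γ 2) : ℂ)) := by
  have h21 : (β - Finsupp.single 2 (γ 2) : Fin 3 →₀ ℕ) 1 = β 1 := by
    simp [Finsupp.tsub_apply, Finsupp.single_apply]
  have h10 : (β - Finsupp.single 2 (γ 2) - Finsupp.single 1 (γ 1) : Fin 3 →₀ ℕ) 0 = β 0 := by
    simp [Finsupp.tsub_apply, Finsupp.single_apply]
  rw [iterPD, LinearMap.comp_apply, LinearMap.comp_apply, powPD_monomial,
    powPD_monomial, powPD_monomial, h21, h10]
  rw [tsub_tsub, tsub_tsub]
  congr 1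
  · rw [sgl]; congr 1; abel_nf
  · ring

theorem eval_iterPD_monomial (a : Fin 3 → ℂ) (γ : Fin 3 → ℕ) (β : Fin 3 →₀ ℕ) :
    eval a (iterPD γ (monomial β 1))
      = (((β 0).descFactorial (γ 0) : ℂ) * ((β 1).descFactorial (γ 1) : ℂ)
            * ((β 2).descFactorial (γ 2) : ℂ))
          * (a 0 ^ (β 0 - γ 0) * a 1 ^ (β 1 - γ 1) * a 2 ^ (β 2 - γ 2)) := by
  rw [iterPD_monomial, eval_monomial,
    Finsupp.prod_fintype _ _ (fun j => pow_zero (a j)), Fin.prod_univ_three]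
  simp only [Finsupp.tsub_apply, sgl_apply]
  ring

theorem degree_fin3 (m : Fin 3 →₀ ℕ) : m.degree = m 0 + m 1 + m 2 := by
  rw [Finsupp.degree_apply, Finset.sum_subset (Finset.subset_univ _)
    (fun x _ hx => Finsupp.notMem_support_iff.mp hx), Fin.sum_univ_three]

/-- The equivalence with `Sym (Fin 3) d`, for counting. -/
noncomputable def symEquiv (d : ℕ) :
    {α : Fin 3 → ℕ // α 0 + α 1 + α 2 = d} ≃ Sym (Fin 3) d :=
  ((Equiv.subtypeEquivRight (fun P => by rw [Fin.sum_univ_three])).trans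
    (Sym.equivNatSumOfFintype (Fin 3) d).symm)

noncomputable instance (d : ℕ) : Fintype {α : Fin 3 → ℕ // α 0 + α 1 + α 2 = d} :=
  Fintype.ofEquiv _ (symEquiv d).symm

theorem card_eq (n : ℕ) (hn : 2 ≤ n) :
    Nat.card {α : Fin 3 → ℕ // α 0 + α 1 + α 2 = n - 2} = n.choose 2 := by
  rw [Nat.card_eq_of_equiv_fin ((symEquiv (n-2)).trans (Fintype.equivFin _))]
  rw [Sym.card_sym_eq_multichoose, Nat.multichoose_eq]
  have h3 : Fintype.card (Fin 3) + (n - 2) - 1 = n := by simp; omega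
  rw [h3]
  calc n.choose (n - 2) = n.choose (n - (n-2)) := (Nat.choose_symm (by omega)).symm
    _ = n.choose 2 := by congr 1; omega

section Main

variable (n : ℕ) (a : Fin 3 → ℂ)

/-- evaluation at `a` as a linear map -/
noncomputable def evalLin : MvPolynomial (Fin 3) ℂ →ₗ[ℂ] ℂ where
  toFun := eval a
  map_add' f g := map_add _ f g
  map_smul' c f := smul_eval a f c

theorem evalLin_apply (f : MvPolynomial (Fin 3) ℂ) : evalLin a f = eval a f := rfl

/-- the bundled linear map of the statement -/
noncomputable def L :
    homogeneousSubmodule (Fin 3) ℂ n →ₗ[ℂ]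
      ({α : Fin 3 → ℕ // α 0 + α 1 + α 2 = n - 2} → ℂ) :=
  LinearMap.pi fun γ =>
    evalLin a ∘ₗ iterPD γ.1 ∘ₗ (homogeneousSubmodule (Fin 3) ℂ n).subtype

theorem L_apply (f : homogeneousSubmodule (Fin 3) ℂ n)
    (γ : {α : Fin 3 → ℕ // α 0 + α 1 + α 2 = n - 2}) :
    L n a f γ = eval a (iterPD γ.1 f.1) := by
  simp [L, evalLin_apply]

theorem surj (hn : 2 ≤ n) (i : Fin 3) (hi : a i ≠ 0) :
    ∀ v : {α : Fin 3 → ℕ // α 0 + α 1 + α 2 = n - 2} → ℂ,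
      v ∈ LinearMap.range (L n a) := by
  classical
  set S := {α : Fin 3 → ℕ // α 0 + α 1 + α 2 = n - 2}
  have key : ∀ m : ℕ, ∀ α : S, (n - 2) - α.1 i < m →
      (Pi.single α 1 : S → ℂ) ∈ LinearMap.range (L n a) := by
    intro m
    induction m with
    | zero => intro α h; omega
    | succ m ih =>
        intro α hα
        -- the auxiliary monomial
        set β : Fin 3 →₀ ℕ := sgl α.1 + Finsupp.single i 2 with hβ
        have hβval : ∀ j, β j = α.1 j + (if i = j then 2 else 0) := by
          intro j
          simp [hβ, sgl_apply, Finsupp.single_apply]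
        have hαsum := α.2
        have hβmem : (monomial β (1 : ℂ)) ∈ homogeneousSubmodule (Fin 3) ℂ n := by
          rw [mem_homogeneousSubmodule]
          apply isHomogeneous_monomial
          rw [degree_fin3, hβval 0, hβval 1, hβval 2]
          fin_cases i <;> simp <;> omega
        set w := L n a ⟨monomial β 1, hβmem⟩ with hw
        have hwR : w ∈ LinearMap.range (L n a) := ⟨_, rfl⟩
        have hwval : ∀ γ : S, w γ
            = (((β 0).descFactorial (γ.1 0) : ℂ) * ((β 1).descFactorial (γ.1 1) : ℂ)
                * ((β 2).descFactorial (γ.1 2) : ℂ))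
              * (a 0 ^ (β 0 - γ.1 0) * a 1 ^ (β 1 - γ.1 1) * a 2 ^ (β 2 - γ.1 2)) := by
          intro γ
          rw [hw, L_apply, eval_iterPD_monomial]
        -- values at indices with small i-th coordinate vanish
        have hvanish : ∀ γ : S, γ ≠ α → ¬ (α.1 i < γ.1 i) → w γ = 0 := by
          intro γ hne hlt
          rw [hwval]
          rcases Nat.lt_or_ge (β 0) (γ.1 0) with h | hb0
          · rw [Nat.descFactorial_eq_zero_iff_lt.mpr h]; simp
          rcases Nat.lt_or_ge (β 1) (γ.1 1) with h | hb1
          · rw [Nat.descFactorial_eq_zero_iff_lt.mpr h]; simp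
          rcases Nat.lt_or_ge (β 2) (γ.1 2) with h | hb2
          · rw [Nat.descFactorial_eq_zero_iff_lt.mpr h]; simp
          exfalso
          have hγsum := γ.2
          simp only [hβval] at hb0 hb1 hb2
          have heq : γ.1 0 = α.1 0 ∧ γ.1 1 = α.1 1 ∧ γ.1 2 = α.1 2 := by
            fin_cases i <;> simp at hb0 hb1 hb2 hlt ⊢ <;> omega
          exact hne (Subtype.ext (funext fun j => by fin_cases j <;>
            simp [heq.1, heq.2.1, heq.2.2]))
        -- the diagonal value is nonzero
        have hdiag : w α ≠ 0 := by
          rw [hwval]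
          have hd : ∀ j, ((β j).descFactorial (α.1 j) : ℂ) ≠ 0 := by
            intro j
            have h1 : α.1 j ≤ β j := by rw [hβval j]; omega
            have h2 : (β j).descFactorial (α.1 j) ≠ 0 := by
              rw [Ne, Nat.descFactorial_eq_zero_iff_lt]; omega
            exact_mod_cast h2
          have he : a 0 ^ (β 0 - α.1 0) * a 1 ^ (β 1 - α.1 1) * a 2 ^ (β 2 - α.1 2)
              = a i ^ 2 := by
            fin_cases i <;> simp [hβval]
          rw [he]
          exact mul_ne_zero (mul_ne_zero (mul_ne_zero (hd 0) (hd 1)) (hd 2))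
            (pow_ne_zero 2 hi)
        -- subtract off the higher terms
        have hsum : w - w α • (Pi.single α 1 : S → ℂ)
            = ∑ γ ∈ Finset.univ.erase α, w γ • (Pi.single γ 1 : S → ℂ) := by
          have h := Finset.add_sum_erase Finset.univ
            (fun γ : S => w γ • (Pi.single γ 1 : S → ℂ)) (Finset.mem_univ α)
          have hv2 : w = ∑ γ : S, w γ • (Pi.single γ 1 : S → ℂ) := by
            funext j
            simp [Finset.sum_apply, Pi.single_apply]
            rw [Finset.sum_ite_eq]; simp
          exact (eq_sub_of_add_eq' (h.trans hv2.symm)).symm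
        have hrest : w - w α • (Pi.single α 1 : S → ℂ) ∈ LinearMap.range (L n a) := by
          rw [hsum]
          refine Submodule.sum_mem _ fun γ hγ => ?_
          have hne : γ ≠ α := Finset.ne_of_mem_erase hγ
          by_cases hz : w γ = 0
          · simp [hz]
          · have hlt : α.1 i < γ.1 i := by
              by_contra hcon
              exact hz (hvanish γ hne hcon)
            have hγb : γ.1 i ≤ n - 2 := by
              have hs := γ.2
              fin_cases i
              · exact (show γ.1 0 ≤ n - 2 by omega)
              · exact (show γ.1 1 ≤ n - 2 by omega)
              · exact (show γ.1 2 ≤ n - 2 by omega)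
            exact Submodule.smul_mem _ _ (ih γ (by omega))
        have hαmem : w α • (Pi.single α 1 : S → ℂ) ∈ LinearMap.range (L n a) := by
          have := Submodule.sub_mem _ hwR hrest
          simpa using this
        have := Submodule.smul_mem _ (w α)⁻¹ hαmem
        rwa [smul_smul, inv_mul_cancel₀ hdiag, one_smul] at this
  intro v
  have hv : v = ∑ γ : S, v γ • (Pi.single γ 1 : S → ℂ) := by
    funext j
    simp [Finset.sum_apply, Pi.single_apply]
    rw [Finset.sum_eq_single j (fun b _ hb => if_neg (Ne.symm hb)) (by simp)]; simp
  rw [hv]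
  exact Submodule.sum_mem _ fun γ _ =>
    Submodule.smul_mem _ _ (key ((n-2) - γ.1 i + 1) γ (by omega))

end Main
end Stmt7Aux

theorem stmt_7 (n : ℕ) (hn : 2 ≤ n) (a : Fin 3 → ℂ) (ha : a ≠ 0) :
    Nat.card {α : Fin 3 → ℕ // α 0 + α 1 + α 2 = n - 2} = n.choose 2 ∧
      Function.Surjective
        (fun f : homogeneousSubmodule (Fin 3) ℂ n =>
          fun α : {α : Fin 3 → ℕ // α 0 + α 1 + α 2 = n - 2} =>
            eval a (iterPD α.1 f.1)) := by
  obtain ⟨i, hi⟩ := Function.ne_iff.mp ha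
  refine ⟨Stmt7Aux.card_eq n hn, ?_⟩
  intro v
  obtain ⟨f, hf⟩ := Stmt7Aux.surj n a hn i hi v
  refine ⟨f, ?_⟩
  funext γ
  rw [← hf, Stmt7Aux.L_apply]
end
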